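/- Regard ℝ[[x₁,…,xₙ]] and ℝ[[y₁,…,yₘ]] as subrings of ℝ[[x₁,…,xₙ,y₁,…,yₘ]] in the canonical way. Let I be an ideal of ℝ[[x₁,…,xₙ]] and J an ideal of ℝ[[y₁,…,yₘ]], and write A = ℝ[[x₁,…,xₙ]]/I and B = ℝ[[y₁,…,yₘ]]/J. Let k ≥ 1, and let f₀ ∈ ℝ[[x₁,…,xₙ]] and g₀ ∈ ℝ[[y₁,…,yₘ]] be such that the class a₀ of f₀ in A satisfies a₀^k = 0 and a₀^{k−1} ≠ 0, and the class b₀ of g₀ in B satisfies b₀^k = 0 and b₀^{k−1} ≠ 0. Let K be the ideal of ℝ[[x₁,…,xₙ,y₁,…,yₘ]] generated by I ∪ J ∪ {f₀ − g₀}. Then the canonical ring homomorphism A → ℝ[[x₁,…,xₙ,y₁,…,yₘ]]/K (induced by the inclusion ℝ[[x₁,…,xₙ]] ⊆ ℝ[[x₁,…,xₙ,y₁,…,yₘ]]) is injective. -/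

import Mathlib

open Classical

/-- The canonical inclusion `ℝ[[x₁,…,xₙ]] ⊆ ℝ[[x₁,…,xₙ,y₁,…,yₘ]]` (on coefficients). -/
noncomputable def inclX {n m : ℕ} (f : MvPowerSeries (Fin n) ℝ) :
    MvPowerSeries (Fin n ⊕ Fin m) ℝ :=
  fun d =>
    if h : ∃ e : Fin n →₀ ℕ,
        Finsupp.embDomain ⟨Sum.inl, Sum.inl_injective⟩ e = d then
      MvPowerSeries.coeff (R := ℝ) h.choose f
    else 0

/-- The canonical inclusion `ℝ[[y₁,…,yₘ]] ⊆ ℝ[[x₁,…,xₙ,y₁,…,yₘ]]` (on coefficients). -/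
noncomputable def inclY {n m : ℕ} (g : MvPowerSeries (Fin m) ℝ) :
    MvPowerSeries (Fin n ⊕ Fin m) ℝ :=
  fun d =>
    if h : ∃ e : Fin m →₀ ℕ,
        Finsupp.embDomain ⟨Sum.inr, Sum.inr_injective⟩ e = d then
      MvPowerSeries.coeff (R := ℝ) h.choose g
    else 0

section Aux

variable {n m : ℕ}

noncomputable def embX (d : Fin n →₀ ℕ) : (Fin n ⊕ Fin m) →₀ ℕ :=
  Finsupp.embDomain ⟨Sum.inl, Sum.inl_injective⟩ d

noncomputable def embY (e : Fin m →₀ ℕ) : (Fin n ⊕ Fin m) →₀ ℕ :=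
  Finsupp.embDomain ⟨Sum.inr, Sum.inr_injective⟩ e

noncomputable def comb (d : Fin n →₀ ℕ) (e : Fin m →₀ ℕ) : (Fin n ⊕ Fin m) →₀ ℕ :=
  embX d + embY e

@[simp] lemma embX_inl (d : Fin n →₀ ℕ) (a : Fin n) : (embX (m := m) d) (Sum.inl a) = d a :=
  Finsupp.embDomain_apply_self _ _ _

@[simp] lemma embX_inr (d : Fin n →₀ ℕ) (b : Fin m) : (embX (m := m) d) (Sum.inr b) = 0 :=
  Finsupp.embDomain_notin_range _ _ _ (by simp)

@[simp] lemma embY_inr (e : Fin m →₀ ℕ) (b : Fin m) : (embY (n := n) e) (Sum.inr b) = e b :=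
  Finsupp.embDomain_apply_self _ _ _

@[simp] lemma embY_inl (e : Fin m →₀ ℕ) (a : Fin n) : (embY (n := n) e) (Sum.inl a) = 0 :=
  Finsupp.embDomain_notin_range _ _ _ (by simp)

@[simp] lemma comb_inl (d : Fin n →₀ ℕ) (e : Fin m →₀ ℕ) (a : Fin n) :
    comb d e (Sum.inl a) = d a := by
  simp [comb, Finsupp.add_apply]

@[simp] lemma comb_inr (d : Fin n →₀ ℕ) (e : Fin m →₀ ℕ) (b : Fin m) :
    comb d e (Sum.inr b) = e b := by
  simp [comb, Finsupp.add_apply]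

lemma embX_injective : Function.Injective (embX (n := n) (m := m)) :=
  Finsupp.embDomain_injective _

lemma embY_injective : Function.Injective (embY (n := n) (m := m)) :=
  Finsupp.embDomain_injective _

lemma comb_injective : Function.Injective (Function.uncurry (comb (n := n) (m := m))) := by
  intro p q h
  have h1 : ∀ a, comb p.1 p.2 (Sum.inl a) = comb q.1 q.2 (Sum.inl a) := fun a => by
    rw [show comb p.1 p.2 = comb q.1 q.2 from h]
  have h2 : ∀ b, comb p.1 p.2 (Sum.inr b) = comb q.1 q.2 (Sum.inr b) := fun b => by
    rw [show comb p.1 p.2 = comb q.1 q.2 from h]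
  simp only [comb_inl, comb_inr] at h1 h2
  exact Prod.ext (Finsupp.ext h1) (Finsupp.ext h2)

lemma comb_zero (d : Fin n →₀ ℕ) : comb (m := m) d 0 = embX d := by
  simp [comb, embY, Finsupp.embDomain_zero]

lemma inclX_embX (f : MvPowerSeries (Fin n) ℝ) (d : Fin n →₀ ℕ) :
    inclX (m := m) f (embX d) = f d := by
  have h : ∃ e : Fin n →₀ ℕ,
      Finsupp.embDomain ⟨Sum.inl, Sum.inl_injective⟩ e = embX (m := m) d := ⟨d, rfl⟩
  simp only [inclX]
  rw [dif_pos h]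
  have : h.choose = d := embX_injective h.choose_spec
  rw [this, MvPowerSeries.coeff_apply]

lemma inclX_not_range (f : MvPowerSeries (Fin n) ℝ) {q : (Fin n ⊕ Fin m) →₀ ℕ}
    (hq : ∀ e : Fin n →₀ ℕ, embX e ≠ q) : inclX f q = 0 := by
  simp only [inclX]
  exact dif_neg (fun ⟨e, he⟩ => hq e he)

lemma inclY_embY (g : MvPowerSeries (Fin m) ℝ) (e : Fin m →₀ ℕ) :
    inclY (n := n) g (embY e) = g e := by
  have h : ∃ e' : Fin m →₀ ℕ,
      Finsupp.embDomain ⟨Sum.inr, Sum.inr_injective⟩ e' = embY (n := n) e := ⟨e, rfl⟩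
  simp only [inclY]
  rw [dif_pos h]
  have : h.choose = e := embY_injective h.choose_spec
  rw [this, MvPowerSeries.coeff_apply]

lemma inclY_not_range (g : MvPowerSeries (Fin m) ℝ) {q : (Fin n ⊕ Fin m) →₀ ℕ}
    (hq : ∀ e : Fin m →₀ ℕ, embY e ≠ q) : inclY g q = 0 := by
  simp only [inclY]
  exact dif_neg (fun ⟨e, he⟩ => hq e he)

end Aux

section Slice

variable {n m : ℕ}

noncomputable def sliceAt (s : MvPowerSeries (Fin n ⊕ Fin m) ℝ) (d : Fin n →₀ ℕ) :
    MvPowerSeries (Fin m) ℝ := fun e => s (comb d e)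

lemma coeff_sliceAt (s : MvPowerSeries (Fin n ⊕ Fin m) ℝ) (d : Fin n →₀ ℕ) (e : Fin m →₀ ℕ) :
    MvPowerSeries.coeff (R := ℝ) e (sliceAt s d) = MvPowerSeries.coeff (R := ℝ) (comb d e) s := rfl

lemma sliceAt_sub (x y : MvPowerSeries (Fin n ⊕ Fin m) ℝ) (d : Fin n →₀ ℕ) :
    sliceAt (x - y) d = sliceAt x d - sliceAt y d := by
  apply MvPowerSeries.ext; intro e
  rw [map_sub, coeff_sliceAt, coeff_sliceAt, coeff_sliceAt, map_sub]

lemma sliceAt_add (x y : MvPowerSeries (Fin n ⊕ Fin m) ℝ) (d : Fin n →₀ ℕ) :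
    sliceAt (x + y) d = sliceAt x d + sliceAt y d := by
  apply MvPowerSeries.ext; intro e
  rw [map_add, coeff_sliceAt, coeff_sliceAt, coeff_sliceAt, map_add]

lemma sliceAt_zero (d : Fin n →₀ ℕ) : sliceAt (0 : MvPowerSeries (Fin n ⊕ Fin m) ℝ) d = 0 := by
  apply MvPowerSeries.ext; intro e
  rw [coeff_sliceAt, map_zero, map_zero]

lemma sliceAt_inclX (f : MvPowerSeries (Fin n) ℝ) (d : Fin n →₀ ℕ) :
    sliceAt (inclX (m := m) f) d = MvPowerSeries.C (σ := Fin m) (R := ℝ) (f d) := by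
  apply MvPowerSeries.ext; intro e
  rw [coeff_sliceAt, MvPowerSeries.coeff_C]
  split_ifs with he
  · subst he
    rw [comb_zero, MvPowerSeries.coeff_apply, inclX_embX]
  · rw [MvPowerSeries.coeff_apply]
    apply inclX_not_range
    intro e' hee
    apply he
    ext b
    have := congrFun (congrArg (fun (q : (Fin n ⊕ Fin m) →₀ ℕ) => (q : (Fin n ⊕ Fin m) → ℕ)) hee) (Sum.inr b)
    simpa using this.symm

lemma sliceAt_mul_inclY (s : MvPowerSeries (Fin n ⊕ Fin m) ℝ) (v : MvPowerSeries (Fin m) ℝ)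
    (d : Fin n →₀ ℕ) : sliceAt (s * inclY v) d = sliceAt s d * v := by
  classical
  apply MvPowerSeries.ext; intro e
  rw [coeff_sliceAt, MvPowerSeries.coeff_mul, MvPowerSeries.coeff_mul]
  have hinj : Function.Injective
      (fun p : (Fin m →₀ ℕ) × (Fin m →₀ ℕ) => (comb d p.1, embY (n := n) p.2)) := by
    intro p q h
    have h1 : comb d p.1 = comb d q.1 := congrArg Prod.fst h
    have h2 : embY (n := n) p.2 = embY q.2 := congrArg Prod.snd h
    have h3 : ((d, p.1) : (Fin n →₀ ℕ) × (Fin m →₀ ℕ)) = (d, q.1) := comb_injective h1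
    rw [Prod.mk.injEq] at h3
    exact Prod.ext h3.2 (embY_injective h2)
  let φ : ((Fin m →₀ ℕ) × (Fin m →₀ ℕ)) ↪
      (((Fin n ⊕ Fin m) →₀ ℕ) × ((Fin n ⊕ Fin m) →₀ ℕ)) := ⟨_, hinj⟩
  have hsub : Finset.map φ (Finset.HasAntidiagonal.antidiagonal e) ⊆ Finset.HasAntidiagonal.antidiagonal (comb d e) := by
    intro pq hpq
    obtain ⟨⟨e1, e2⟩, hmem, rfl⟩ := Finset.mem_map.mp hpq
    rw [Finset.HasAntidiagonal.mem_antidiagonal] at hmem ⊢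
    show comb d e1 + embY e2 = comb d e
    ext x
    cases x with
    | inl a => simp [Finsupp.add_apply]
    | inr b =>
      have : e1 b + e2 b = e b := by rw [← Finsupp.add_apply, hmem]
      simpa [Finsupp.add_apply] using this
  have hzero : ∀ p ∈ Finset.HasAntidiagonal.antidiagonal (comb d e),
      p ∉ Finset.map φ (Finset.HasAntidiagonal.antidiagonal e) →
      MvPowerSeries.coeff (R := ℝ) p.1 s * MvPowerSeries.coeff (R := ℝ) p.2 (inclY v) = 0 := by
    intro p hp hnot
    rw [MvPowerSeries.coeff_apply, MvPowerSeries.coeff_apply]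
    by_cases hex : ∃ e2 : Fin m →₀ ℕ, embY (n := n) e2 = p.2
    · exfalso
      obtain ⟨e2, he2⟩ := hex
      apply hnot
      have hpt : ∀ x, p.1 x + p.2 x = comb d e x := by
        intro x
        rw [← Finsupp.add_apply, Finset.HasAntidiagonal.mem_antidiagonal.mp hp]
      have hle : ∀ b, e2 b ≤ e b := by
        intro b
        have h5 := hpt (Sum.inr b)
        rw [← he2] at h5
        simp only [embY_inr, comb_inr] at h5
        omega
      refine Finset.mem_map.mpr ⟨(e - e2, e2), ?_, ?_⟩
      · rw [Finset.HasAntidiagonal.mem_antidiagonal]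
        ext b
        have := hle b
        simp only [Finsupp.add_apply, Finsupp.tsub_apply]
        omega
      · have hp1 : p.1 = comb d (e - e2) := by
          ext x
          cases x with
          | inl a =>
            have h5 := hpt (Sum.inl a)
            rw [← he2] at h5
            simp only [embY_inl, comb_inl] at h5 ⊢
            omega
          | inr b =>
            have h5 := hpt (Sum.inr b)
            rw [← he2] at h5
            simp only [embY_inr, comb_inr] at h5 ⊢
            rw [Finsupp.tsub_apply]
            omega
        show (comb d (e - e2), embY e2) = p
        rw [← hp1, he2]
    · rw [inclY_not_range v (fun e2 he => hex ⟨e2, he⟩), mul_zero]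
  rw [← Finset.sum_subset hsub hzero, Finset.sum_map]
  apply Finset.sum_congr rfl
  intro p _
  show s (comb d p.1) * inclY v (embY p.2) = _
  rw [inclY_embY]
  rfl

lemma sliceAt_mul_inclX (s : MvPowerSeries (Fin n ⊕ Fin m) ℝ) (u : MvPowerSeries (Fin n) ℝ)
    (d : Fin n →₀ ℕ) : sliceAt (s * inclX u) d
      = ∑ p ∈ Finset.HasAntidiagonal.antidiagonal d, u p.2 • sliceAt s p.1 := by
  classical
  apply MvPowerSeries.ext; intro e
  rw [coeff_sliceAt, MvPowerSeries.coeff_mul, map_sum]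
  have hinj : Function.Injective
      (fun p : (Fin n →₀ ℕ) × (Fin n →₀ ℕ) => (comb p.1 e, embX (m := m) p.2)) := by
    intro p q h
    have h1 : comb p.1 e = comb q.1 e := congrArg Prod.fst h
    have h2 : embX (m := m) p.2 = embX q.2 := congrArg Prod.snd h
    have h3 : ((p.1, e) : (Fin n →₀ ℕ) × (Fin m →₀ ℕ)) = (q.1, e) := comb_injective h1
    rw [Prod.mk.injEq] at h3
    exact Prod.ext h3.1 (embX_injective h2)
  let φ : ((Fin n →₀ ℕ) × (Fin n →₀ ℕ)) ↪
      (((Fin n ⊕ Fin m) →₀ ℕ) × ((Fin n ⊕ Fin m) →₀ ℕ)) := ⟨_, hinj⟩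
  have hsub : Finset.map φ (Finset.HasAntidiagonal.antidiagonal d) ⊆ Finset.HasAntidiagonal.antidiagonal (comb d e) := by
    intro pq hpq
    obtain ⟨⟨d1, d2⟩, hmem, rfl⟩ := Finset.mem_map.mp hpq
    rw [Finset.HasAntidiagonal.mem_antidiagonal] at hmem ⊢
    show comb d1 e + embX d2 = comb d e
    ext x
    cases x with
    | inl a =>
      have : d1 a + d2 a = d a := by rw [← Finsupp.add_apply, hmem]
      simpa [Finsupp.add_apply] using this
    | inr b => simp [Finsupp.add_apply]
  have hzero : ∀ p ∈ Finset.HasAntidiagonal.antidiagonal (comb d e),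
      p ∉ Finset.map φ (Finset.HasAntidiagonal.antidiagonal d) →
      MvPowerSeries.coeff (R := ℝ) p.1 s * MvPowerSeries.coeff (R := ℝ) p.2 (inclX u) = 0 := by
    intro p hp hnot
    rw [MvPowerSeries.coeff_apply, MvPowerSeries.coeff_apply]
    by_cases hex : ∃ d2 : Fin n →₀ ℕ, embX (m := m) d2 = p.2
    · exfalso
      obtain ⟨d2, hd2⟩ := hex
      apply hnot
      have hpt : ∀ x, p.1 x + p.2 x = comb d e x := by
        intro x
        rw [← Finsupp.add_apply, Finset.HasAntidiagonal.mem_antidiagonal.mp hp]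
      have hle : ∀ a, d2 a ≤ d a := by
        intro a
        have h5 := hpt (Sum.inl a)
        rw [← hd2] at h5
        simp only [embX_inl, comb_inl] at h5
        omega
      refine Finset.mem_map.mpr ⟨(d - d2, d2), ?_, ?_⟩
      · rw [Finset.HasAntidiagonal.mem_antidiagonal]
        ext a
        have := hle a
        simp only [Finsupp.add_apply, Finsupp.tsub_apply]
        omega
      · have hp1 : p.1 = comb (d - d2) e := by
          ext x
          cases x with
          | inl a =>
            have h5 := hpt (Sum.inl a)
            rw [← hd2] at h5
            simp only [embX_inl, comb_inl] at h5 ⊢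
            rw [Finsupp.tsub_apply]
            omega
          | inr b =>
            have h5 := hpt (Sum.inr b)
            rw [← hd2] at h5
            simp only [embX_inr, comb_inr] at h5 ⊢
            omega
        show (comb (d - d2) e, embX d2) = p
        rw [← hp1, hd2]
    · rw [inclX_not_range u (fun d2 hd => hex ⟨d2, hd⟩), mul_zero]
  rw [← Finset.sum_subset hsub hzero, Finset.sum_map]
  apply Finset.sum_congr rfl
  intro p _
  show s (comb p.1 e) * inclX u (embX p.2) = MvPowerSeries.coeff (R := ℝ) e (u p.2 • sliceAt s p.1)
  rw [inclX_embX, MvPowerSeries.coeff_smul]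
  exact mul_comm _ _

end Slice

section Mu

variable {m k : ℕ}

set_option maxHeartbeats 1000000 in
set_option synthInstance.maxHeartbeats 200000 in
lemma exists_mu (J : Ideal (MvPowerSeries (Fin m) ℝ)) (g₀ : MvPowerSeries (Fin m) ℝ)
    (hb : Ideal.Quotient.mk J g₀ ^ k = 0)
    (hb' : Ideal.Quotient.mk J g₀ ^ (k - 1) ≠ 0) :
    ∃ μ : (MvPowerSeries (Fin m) ℝ ⧸ J) →ₗ[ℝ] ℝ,
      ∀ j : ℕ, j < k → μ (Ideal.Quotient.mk J g₀ ^ j) = if j = k - 1 then 1 else 0 := by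
  classical
  set b₀ := Ideal.Quotient.mk J g₀ with hb₀
  have hk : 1 ≤ k := by
    rcases Nat.eq_zero_or_pos k with h | h
    · subst h
      simp only [pow_zero, Nat.zero_sub] at hb hb'
      exact absurd hb hb'
    · exact h
  have hli : LinearIndependent ℝ (fun i : Fin k => b₀ ^ (i : ℕ)) := by
    rw [Fintype.linearIndependent_iff]
    intro g hg
    by_contra hc
    push_neg at hc
    obtain ⟨i, hi⟩ := hc
    have hP : ∃ j : ℕ, ∃ h : j < k, g ⟨j, h⟩ ≠ 0 := ⟨i, i.2, by simpa using hi⟩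
    set i₀ := Nat.find hP with hi₀def
    obtain ⟨hi₀k, hi₀⟩ := Nat.find_spec hP
    have hmul := congrArg (· * b₀ ^ (k - 1 - i₀)) hg
    simp only [Finset.sum_mul, zero_mul, smul_mul_assoc, ← pow_add] at hmul
    rw [Finset.sum_eq_single (⟨i₀, hi₀k⟩ : Fin k)] at hmul
    · have hexp : (i₀ : ℕ) + (k - 1 - i₀) = k - 1 := by omega
      rw [hexp] at hmul
      apply hb'
      have : b₀ ^ (k-1) = (g ⟨i₀, hi₀k⟩)⁻¹ • (g ⟨i₀, hi₀k⟩ • b₀ ^ (k-1)) := by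
        rw [smul_smul, inv_mul_cancel₀ hi₀, one_smul]
      rw [this, hmul, smul_zero]
    · intro i _ hne
      rcases lt_or_gt_of_ne (fun hc : (i : ℕ) = i₀ => hne (Fin.ext hc)) with hlt | hgt
      · have : g i = 0 := by
          have := Nat.find_min hP (m := (i : ℕ)) hlt
          push_neg at this
          have h2 := this i.2
          simpa using h2
        rw [this, zero_smul]
      · have hge : k ≤ (i : ℕ) + (k - 1 - i₀) := by omega
        have : b₀ ^ ((i : ℕ) + (k - 1 - i₀)) = 0 := by
          rw [show (i : ℕ) + (k - 1 - i₀) = k + ((i : ℕ) + (k - 1 - i₀) - k) by omega,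
            pow_add, hb, zero_mul]
        rw [this, smul_zero]
    · intro hnot
      exact absurd (Finset.mem_univ _) hnot
  obtain ⟨μ, hμ⟩ := LinearMap.exists_extend
    (((Module.Basis.span hli).constr ℝ) (fun i : Fin k => if (i : ℕ) = k - 1 then (1 : ℝ) else 0))
  refine ⟨μ, ?_⟩
  intro j hj
  have h1 : (Submodule.span ℝ (Set.range fun i : Fin k => b₀ ^ (i : ℕ))).subtype
      ((Module.Basis.span hli) ⟨j, hj⟩) = b₀ ^ j := congrArg Subtype.val (Module.Basis.span_apply hli ⟨j, hj⟩)
  have h2 := congrArg (fun (f : _ →ₗ[ℝ] ℝ) => f ((Module.Basis.span hli) ⟨j, hj⟩)) hμ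
  simp only [LinearMap.comp_apply] at h2
  rw [h1] at h2
  rw [h2, Module.Basis.constr_basis]

end Mu

section MuAux

variable {m : ℕ}

noncomputable def muAux (J : Ideal (MvPowerSeries (Fin m) ℝ)) (g₀ : MvPowerSeries (Fin m) ℝ)
    (μ : (MvPowerSeries (Fin m) ℝ ⧸ J) →ₗ[ℝ] ℝ) (j : ℕ) :
    MvPowerSeries (Fin m) ℝ →ₗ[ℝ] ℝ :=
  μ.comp ((LinearMap.mulRight ℝ ((Ideal.Quotient.mk J g₀) ^ j)).comp
    (Ideal.Quotient.mkₐ ℝ J).toLinearMap)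

lemma muAux_apply (J : Ideal (MvPowerSeries (Fin m) ℝ)) (g₀ w : MvPowerSeries (Fin m) ℝ)
    (μ : (MvPowerSeries (Fin m) ℝ ⧸ J) →ₗ[ℝ] ℝ) (j : ℕ) :
    muAux J g₀ μ j w = μ (Ideal.Quotient.mk J w * (Ideal.Quotient.mk J g₀) ^ j) := rfl

lemma muAux_mul_g (J : Ideal (MvPowerSeries (Fin m) ℝ)) (g₀ w : MvPowerSeries (Fin m) ℝ)
    (μ : (MvPowerSeries (Fin m) ℝ ⧸ J) →ₗ[ℝ] ℝ) (j : ℕ) :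
    muAux J g₀ μ j (w * g₀) = muAux J g₀ μ (j + 1) w := by
  rw [muAux_apply, muAux_apply, map_mul (Ideal.Quotient.mk J) w g₀, mul_assoc, ← pow_succ']

lemma muAux_top (J : Ideal (MvPowerSeries (Fin m) ℝ)) (g₀ w : MvPowerSeries (Fin m) ℝ)
    (μ : (MvPowerSeries (Fin m) ℝ ⧸ J) →ₗ[ℝ] ℝ) {k j : ℕ}
    (hb : Ideal.Quotient.mk J g₀ ^ k = 0) (hj : k ≤ j) :
    muAux J g₀ μ j w = 0 := by
  rw [muAux_apply, show j = k + (j - k) by omega, pow_add, hb, zero_mul, mul_zero, map_zero]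

lemma muAux_mem (J : Ideal (MvPowerSeries (Fin m) ℝ)) (g₀ w : MvPowerSeries (Fin m) ℝ)
    {v : MvPowerSeries (Fin m) ℝ} (hv : v ∈ J)
    (μ : (MvPowerSeries (Fin m) ℝ ⧸ J) →ₗ[ℝ] ℝ) (j : ℕ) :
    muAux J g₀ μ j (w * v) = 0 := by
  rw [muAux_apply, map_mul (Ideal.Quotient.mk J) w v, Ideal.Quotient.eq_zero_iff_mem.mpr hv, mul_zero, zero_mul, map_zero]

lemma muAux_C (J : Ideal (MvPowerSeries (Fin m) ℝ)) (g₀ : MvPowerSeries (Fin m) ℝ)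
    (μ : (MvPowerSeries (Fin m) ℝ ⧸ J) →ₗ[ℝ] ℝ) (j : ℕ) (r : ℝ) :
    muAux J g₀ μ j (MvPowerSeries.C (σ := Fin m) (R := ℝ) r) = r * μ (Ideal.Quotient.mk J g₀ ^ j) := by
  rw [muAux_apply, MvPowerSeries.c_eq_algebraMap]
  rw [show (Ideal.Quotient.mk J) ((algebraMap ℝ (MvPowerSeries (Fin m) ℝ)) r)
    = algebraMap ℝ (MvPowerSeries (Fin m) ℝ ⧸ J) r from
      ((Ideal.Quotient.mkₐ ℝ J).commutes r)]
  rw [← Algebra.smul_def, map_smul, smul_eq_mul]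

end MuAux

section SeriesT

variable {n m : ℕ}

noncomputable def seriesT (J : Ideal (MvPowerSeries (Fin m) ℝ)) (g₀ : MvPowerSeries (Fin m) ℝ)
    (μ : (MvPowerSeries (Fin m) ℝ ⧸ J) →ₗ[ℝ] ℝ) (j : ℕ)
    (s : MvPowerSeries (Fin n ⊕ Fin m) ℝ) : MvPowerSeries (Fin n) ℝ :=
  fun d => muAux J g₀ μ j (sliceAt s d)

lemma coeff_seriesT (J : Ideal (MvPowerSeries (Fin m) ℝ)) (g₀ : MvPowerSeries (Fin m) ℝ)
    (μ : (MvPowerSeries (Fin m) ℝ ⧸ J) →ₗ[ℝ] ℝ) (j : ℕ)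
    (s : MvPowerSeries (Fin n ⊕ Fin m) ℝ) (d : Fin n →₀ ℕ) :
    MvPowerSeries.coeff (R := ℝ) d (seriesT J g₀ μ j s) = muAux J g₀ μ j (sliceAt s d) := rfl

lemma seriesT_add (J : Ideal (MvPowerSeries (Fin m) ℝ)) (g₀ : MvPowerSeries (Fin m) ℝ)
    (μ : (MvPowerSeries (Fin m) ℝ ⧸ J) →ₗ[ℝ] ℝ) (j : ℕ)
    (x y : MvPowerSeries (Fin n ⊕ Fin m) ℝ) :
    seriesT J g₀ μ j (x + y) = seriesT J g₀ μ j x + seriesT J g₀ μ j y := by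
  apply MvPowerSeries.ext; intro d
  rw [map_add, coeff_seriesT, coeff_seriesT, coeff_seriesT, sliceAt_add, map_add]

lemma seriesT_sub (J : Ideal (MvPowerSeries (Fin m) ℝ)) (g₀ : MvPowerSeries (Fin m) ℝ)
    (μ : (MvPowerSeries (Fin m) ℝ ⧸ J) →ₗ[ℝ] ℝ) (j : ℕ)
    (x y : MvPowerSeries (Fin n ⊕ Fin m) ℝ) :
    seriesT J g₀ μ j (x - y) = seriesT J g₀ μ j x - seriesT J g₀ μ j y := by
  apply MvPowerSeries.ext; intro d
  rw [map_sub, coeff_seriesT, coeff_seriesT, coeff_seriesT, sliceAt_sub, map_sub]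

lemma seriesT_zero (J : Ideal (MvPowerSeries (Fin m) ℝ)) (g₀ : MvPowerSeries (Fin m) ℝ)
    (μ : (MvPowerSeries (Fin m) ℝ ⧸ J) →ₗ[ℝ] ℝ) (j : ℕ) :
    seriesT (n := n) J g₀ μ j 0 = 0 := by
  apply MvPowerSeries.ext; intro d
  rw [map_zero, coeff_seriesT, sliceAt_zero, map_zero]

lemma seriesT_inclX (J : Ideal (MvPowerSeries (Fin m) ℝ)) (g₀ : MvPowerSeries (Fin m) ℝ)
    (μ : (MvPowerSeries (Fin m) ℝ ⧸ J) →ₗ[ℝ] ℝ) (j : ℕ) (f : MvPowerSeries (Fin n) ℝ) :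
    seriesT J g₀ μ j (inclX f) = μ (Ideal.Quotient.mk J g₀ ^ j) • f := by
  apply MvPowerSeries.ext; intro d
  rw [MvPowerSeries.coeff_smul, coeff_seriesT, sliceAt_inclX, muAux_C,
    MvPowerSeries.coeff_apply, mul_comm]

lemma seriesT_mul_inclX (J : Ideal (MvPowerSeries (Fin m) ℝ)) (g₀ : MvPowerSeries (Fin m) ℝ)
    (μ : (MvPowerSeries (Fin m) ℝ ⧸ J) →ₗ[ℝ] ℝ) (j : ℕ)
    (s : MvPowerSeries (Fin n ⊕ Fin m) ℝ) (u : MvPowerSeries (Fin n) ℝ) :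
    seriesT J g₀ μ j (s * inclX u) = seriesT J g₀ μ j s * u := by
  apply MvPowerSeries.ext; intro d
  rw [coeff_seriesT, sliceAt_mul_inclX, map_sum, MvPowerSeries.coeff_mul]
  apply Finset.sum_congr rfl
  intro p _
  rw [map_smul, smul_eq_mul, coeff_seriesT, MvPowerSeries.coeff_apply, mul_comm]

lemma seriesT_mul_inclY_mem (J : Ideal (MvPowerSeries (Fin m) ℝ)) (g₀ : MvPowerSeries (Fin m) ℝ)
    (μ : (MvPowerSeries (Fin m) ℝ ⧸ J) →ₗ[ℝ] ℝ) (j : ℕ)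
    (s : MvPowerSeries (Fin n ⊕ Fin m) ℝ) {v : MvPowerSeries (Fin m) ℝ} (hv : v ∈ J) :
    seriesT J g₀ μ j (s * inclY v) = 0 := by
  apply MvPowerSeries.ext; intro d
  rw [map_zero, coeff_seriesT, sliceAt_mul_inclY, muAux_mem J g₀ _ hv]

lemma seriesT_mul_inclY_g (J : Ideal (MvPowerSeries (Fin m) ℝ)) (g₀ : MvPowerSeries (Fin m) ℝ)
    (μ : (MvPowerSeries (Fin m) ℝ ⧸ J) →ₗ[ℝ] ℝ) (j : ℕ)
    (s : MvPowerSeries (Fin n ⊕ Fin m) ℝ) :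
    seriesT J g₀ μ j (s * inclY g₀) = seriesT J g₀ μ (j + 1) s := by
  apply MvPowerSeries.ext; intro d
  rw [coeff_seriesT, coeff_seriesT, sliceAt_mul_inclY, muAux_mul_g]

lemma seriesT_top (J : Ideal (MvPowerSeries (Fin m) ℝ)) (g₀ : MvPowerSeries (Fin m) ℝ)
    (μ : (MvPowerSeries (Fin m) ℝ ⧸ J) →ₗ[ℝ] ℝ) {k j : ℕ}
    (hb : Ideal.Quotient.mk J g₀ ^ k = 0) (hj : k ≤ j)
    (s : MvPowerSeries (Fin n ⊕ Fin m) ℝ) :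
    seriesT J g₀ μ j s = 0 := by
  apply MvPowerSeries.ext; intro d
  rw [map_zero, coeff_seriesT, muAux_top J g₀ _ μ hb hj]

end SeriesT

section Tmap

variable {n m : ℕ}

noncomputable def Tmap (k : ℕ) (I : Ideal (MvPowerSeries (Fin n) ℝ))
    (J : Ideal (MvPowerSeries (Fin m) ℝ)) (f₀ : MvPowerSeries (Fin n) ℝ)
    (g₀ : MvPowerSeries (Fin m) ℝ) (μ : (MvPowerSeries (Fin m) ℝ ⧸ J) →ₗ[ℝ] ℝ)
    (s : MvPowerSeries (Fin n ⊕ Fin m) ℝ) : MvPowerSeries (Fin n) ℝ ⧸ I :=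
  ∑ i ∈ Finset.range k, (Ideal.Quotient.mk I f₀) ^ i *
    Ideal.Quotient.mk I (seriesT J g₀ μ (k - 1 - i) s)

variable (k : ℕ) (I : Ideal (MvPowerSeries (Fin n) ℝ)) (J : Ideal (MvPowerSeries (Fin m) ℝ))
    (f₀ : MvPowerSeries (Fin n) ℝ) (g₀ : MvPowerSeries (Fin m) ℝ)
    (μ : (MvPowerSeries (Fin m) ℝ ⧸ J) →ₗ[ℝ] ℝ)

lemma Tmap_add (x y : MvPowerSeries (Fin n ⊕ Fin m) ℝ) :
    Tmap k I J f₀ g₀ μ (x + y) = Tmap k I J f₀ g₀ μ x + Tmap k I J f₀ g₀ μ y := by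
  unfold Tmap
  rw [← Finset.sum_add_distrib]
  apply Finset.sum_congr rfl
  intro i _
  rw [seriesT_add, map_add, mul_add]

lemma Tmap_zero : Tmap k I J f₀ g₀ μ 0 = 0 := by
  unfold Tmap
  apply Finset.sum_eq_zero
  intro i _
  rw [seriesT_zero, map_zero, mul_zero]

lemma Tmap_sub (x y : MvPowerSeries (Fin n ⊕ Fin m) ℝ) :
    Tmap k I J f₀ g₀ μ (x - y) = Tmap k I J f₀ g₀ μ x - Tmap k I J f₀ g₀ μ y := by
  unfold Tmap
  rw [← Finset.sum_sub_distrib]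
  apply Finset.sum_congr rfl
  intro i _
  rw [seriesT_sub, map_sub, mul_sub]

lemma Tmap_inclX (hk : 1 ≤ k)
    (hμ : ∀ j : ℕ, j < k → μ (Ideal.Quotient.mk J g₀ ^ j) = if j = k - 1 then 1 else 0)
    (f : MvPowerSeries (Fin n) ℝ) :
    Tmap k I J f₀ g₀ μ (inclX f) = Ideal.Quotient.mk I f := by
  unfold Tmap
  rw [Finset.sum_eq_single 0]
  · rw [pow_zero, one_mul, seriesT_inclX, Nat.sub_zero,
      hμ (k - 1) (by omega), if_pos rfl, one_smul]
  · intro i hi hne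
    rw [seriesT_inclX, hμ (k - 1 - i) (by omega), if_neg (by
      rw [Finset.mem_range] at hi
      omega), zero_smul, map_zero, mul_zero]
  · intro hnot
    exact absurd (Finset.mem_range.mpr hk) hnot

lemma Tmap_mul_inclX_mem (s : MvPowerSeries (Fin n ⊕ Fin m) ℝ)
    {u : MvPowerSeries (Fin n) ℝ} (hu : u ∈ I) :
    Tmap k I J f₀ g₀ μ (s * inclX u) = 0 := by
  unfold Tmap
  apply Finset.sum_eq_zero
  intro i _
  rw [seriesT_mul_inclX, map_mul (Ideal.Quotient.mk I),
    Ideal.Quotient.eq_zero_iff_mem.mpr hu, mul_zero, mul_zero]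

lemma Tmap_mul_inclY_mem (s : MvPowerSeries (Fin n ⊕ Fin m) ℝ)
    {v : MvPowerSeries (Fin m) ℝ} (hv : v ∈ J) :
    Tmap k I J f₀ g₀ μ (s * inclY v) = 0 := by
  unfold Tmap
  apply Finset.sum_eq_zero
  intro i _
  rw [seriesT_mul_inclY_mem J g₀ μ _ s hv, map_zero, mul_zero]

lemma Tmap_mul_rel (hk : 1 ≤ k) (ha : Ideal.Quotient.mk I f₀ ^ k = 0)
    (hb : Ideal.Quotient.mk J g₀ ^ k = 0) (s : MvPowerSeries (Fin n ⊕ Fin m) ℝ) :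
    Tmap k I J f₀ g₀ μ (s * (inclX f₀ - inclY g₀)) = 0 := by
  rw [mul_sub, Tmap_sub]
  have hx : Tmap k I J f₀ g₀ μ (s * inclX f₀)
      = ∑ i ∈ Finset.range k, (Ideal.Quotient.mk I f₀) ^ (i + 1) *
          Ideal.Quotient.mk I (seriesT J g₀ μ (k - 1 - i) s) := by
    unfold Tmap
    apply Finset.sum_congr rfl
    intro i _
    rw [seriesT_mul_inclX, map_mul (Ideal.Quotient.mk I), pow_succ]
    ring
  have hy : Tmap k I J f₀ g₀ μ (s * inclY g₀)
      = ∑ i ∈ Finset.range k, (Ideal.Quotient.mk I f₀) ^ i *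
          Ideal.Quotient.mk I (seriesT J g₀ μ (k - i) s) := by
    unfold Tmap
    apply Finset.sum_congr rfl
    intro i hi
    rw [seriesT_mul_inclY_g, show k - 1 - i + 1 = k - i from by
      rw [Finset.mem_range] at hi; omega]
  rw [hx, hy]
  apply sub_eq_zero.mpr
  obtain ⟨k', rfl⟩ : ∃ k', k = k' + 1 := ⟨k - 1, by omega⟩
  rw [Finset.sum_range_succ, Finset.sum_range_succ']
  have hlast : (Ideal.Quotient.mk I f₀) ^ (k' + 1) *
      Ideal.Quotient.mk I (seriesT J g₀ μ (k' + 1 - 1 - k') s) = 0 := by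
    rw [ha, zero_mul]
  have hfirst : (Ideal.Quotient.mk I f₀) ^ 0 *
      Ideal.Quotient.mk I (seriesT J g₀ μ (k' + 1 - 0) s) = 0 := by
    rw [seriesT_top J g₀ μ hb (by omega), map_zero, mul_zero]
  rw [hlast, hfirst, add_zero, add_zero]
  apply Finset.sum_congr rfl
  intro i hi
  have : k' + 1 - 1 - i = k' + 1 - (i + 1) := by omega
  rw [this]

end Tmap

/-- The ideal `K` of `ℝ[[x₁,…,xₙ,y₁,…,yₘ]]` generated by `I ∪ J ∪ {f₀ − g₀}`. -/
noncomputable def pushoutIdeal {n m : ℕ} (I : Ideal (MvPowerSeries (Fin n) ℝ))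
    (J : Ideal (MvPowerSeries (Fin m) ℝ)) (f₀ : MvPowerSeries (Fin n) ℝ)
    (g₀ : MvPowerSeries (Fin m) ℝ) : Ideal (MvPowerSeries (Fin n ⊕ Fin m) ℝ) :=
  Ideal.span (inclX '' (I : Set (MvPowerSeries (Fin n) ℝ)) ∪
    (inclY '' (J : Set (MvPowerSeries (Fin m) ℝ)) ∪ {inclX f₀ - inclY g₀}))

/-- Let `A = ℝ[[x₁,…,xₙ]]/I`, `B = ℝ[[y₁,…,yₘ]]/J`, and suppose the classes `a₀` of `f₀`
and `b₀` of `g₀` satisfy `a₀^k = 0 ≠ a₀^{k−1}` and `b₀^k = 0 ≠ b₀^{k−1}`. Let `K` be the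
ideal generated by `I ∪ J ∪ {f₀ − g₀}` in the big power series ring. Then the canonical
ring homomorphism `A → ℝ[[x₁,…,xₙ,y₁,…,yₘ]]/K` (induced by the inclusion of power series
rings) is injective. -/
theorem stmt_18 {n m k : ℕ} (hk : 1 ≤ k)
    (I : Ideal (MvPowerSeries (Fin n) ℝ)) (J : Ideal (MvPowerSeries (Fin m) ℝ))
    (f₀ : MvPowerSeries (Fin n) ℝ) (g₀ : MvPowerSeries (Fin m) ℝ)
    (ha : Ideal.Quotient.mk I f₀ ^ k = 0) (ha' : Ideal.Quotient.mk I f₀ ^ (k - 1) ≠ 0)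
    (hb : Ideal.Quotient.mk J g₀ ^ k = 0) (hb' : Ideal.Quotient.mk J g₀ ^ (k - 1) ≠ 0) :
    ∀ φ : (MvPowerSeries (Fin n) ℝ ⧸ I) →+*
        (MvPowerSeries (Fin n ⊕ Fin m) ℝ ⧸ pushoutIdeal I J f₀ g₀),
      (∀ f : MvPowerSeries (Fin n) ℝ,
        φ (Ideal.Quotient.mk I f) = Ideal.Quotient.mk (pushoutIdeal I J f₀ g₀) (inclX f)) →
      Function.Injective φ := by
  intro φ hφ
  obtain ⟨μ, hμ⟩ := exists_mu J g₀ hb hb'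
  have key : ∀ f : MvPowerSeries (Fin n) ℝ,
      inclX f ∈ pushoutIdeal I J f₀ g₀ → Ideal.Quotient.mk I f = 0 := by
    intro f hf
    have hall : ∀ z, z ∈ pushoutIdeal I J f₀ g₀ →
        ∀ s : MvPowerSeries (Fin n ⊕ Fin m) ℝ, Tmap k I J f₀ g₀ μ (s * z) = 0 := by
      intro z hz
      refine Submodule.span_induction ?_ ?_ ?_ ?_ hz
      · intro x hx s
        rcases hx with hx | hx | hx
        · obtain ⟨u, hu, rfl⟩ := hx
          exact Tmap_mul_inclX_mem k I J f₀ g₀ μ s hu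
        · obtain ⟨v, hv, rfl⟩ := hx
          exact Tmap_mul_inclY_mem k I J f₀ g₀ μ s hv
        · rw [Set.mem_singleton_iff] at hx
          subst hx
          exact Tmap_mul_rel k I J f₀ g₀ μ hk ha hb s
      · intro s
        rw [mul_zero]
        exact Tmap_zero k I J f₀ g₀ μ
      · intro x y _ _ hx hy s
        rw [mul_add, Tmap_add, hx s, hy s, add_zero]
      · intro a x _ hx s
        rw [smul_eq_mul, ← mul_assoc]
        exact hx (s * a)
    have h1 := hall _ hf 1
    rw [one_mul, Tmap_inclX k I J f₀ g₀ μ hk hμ f] at h1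
    exact h1
  rw [injective_iff_map_eq_zero]
  intro a hA
  obtain ⟨f, rfl⟩ := Ideal.Quotient.mk_surjective a
  rw [hφ f] at hA
  exact key f (Ideal.Quotient.eq_zero_iff_mem.mp hA)
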